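/- Coalescence (Λ-part) identity: for n ≥ 1, v ∈ ℝ^{n+1}, x ∈ [0,1] and r ∈ [0,1]: x·⟨B_n(r + (1−r)x), v⟩ + (1−x)·⟨B_n((1−r)x), v⟩ = (1−r)^n ⟨B_n(x), v⟩ + n r (1−r)^{n−1} ⟨B_n(x), v⟩ + ∑_{k=2}^{n} C(n,k) r^k (1−r)^{n−k} ⟨B_{n−k+1}(x), C^{n,k}v⟩. -/

import Mathlib

/-- The Bernstein basis polynomial. -/
noncomputable def bern (n i : ℕ) (x : ℝ) : ℝ := (n.choose i : ℝ) * x^i * (1-x)^(n-i)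

/-- The coagulation operator `C^{n,k}`. -/
noncomputable def coag (n k : ℕ) (v : ℕ → ℝ) (i : ℕ) : ℝ :=
  (i : ℝ)/((n - k + 1 : ℕ) : ℝ) * v (i + k - 1) + (1 - (i : ℝ)/((n - k + 1 : ℕ) : ℝ)) * v i

noncomputable def Aterm (n : ℕ) (v : ℕ → ℝ) (x r : ℝ) (i k : ℕ) : ℝ :=
  (n.choose i : ℝ) * (i.choose k : ℝ) * v i * r^k * (1-r)^(n-k) * x^(i-k+1) * (1-x)^(n-i)

noncomputable def Bterm (n : ℕ) (v : ℕ → ℝ) (x r : ℝ) (i k : ℕ) : ℝ :=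
  (n.choose i : ℝ) * ((n-i).choose k : ℝ) * v i * r^k * (1-r)^(n-k) * x^i * (1-x)^(n-i-k+1)

lemma core_choose {n k j : ℕ} (h : k + j ≤ n) :
    n.choose (k+j) * (k+j).choose k = n.choose k * (n-k).choose j := by
  have := Nat.choose_mul (n := n) (k := k + j) (s := k) (Nat.le_add_right _ _)
  simpa using this

lemma core_choose' {n k j : ℕ} (h : j + k ≤ n) :
    n.choose j * (n-j).choose k = n.choose k * (n-k).choose j := by
  have h1 := core_choose (show j + k ≤ n from h)
  have h2 := core_choose (show k + j ≤ n by omega)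
  have h3 : (j+k).choose j = (k+j).choose k := by
    rw [show j + k = k + j by omega]
    rw [← Nat.choose_symm (by omega : k ≤ k + j), show k + j - k = j by omega]
  calc n.choose j * (n-j).choose k = n.choose (j+k) * (j+k).choose j := h1.symm
    _ = n.choose (k+j) * (k+j).choose k := by rw [h3, Nat.add_comm j k]
    _ = n.choose k * (n-k).choose j := h2

lemma L1 (n : ℕ) (v : ℕ → ℝ) (x r : ℝ) {i : ℕ} (hi : i ≤ n) :
    x * (v i * bern n i (r + (1-r)*x)) = ∑ k ∈ Finset.range (n+1), Aterm n v x r i k := by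
  rw [bern, show (1 - (r + (1-r)*x)) = (1-r)*(1-x) by ring, add_pow]
  simp only [Finset.mul_sum, Finset.sum_mul]
  rw [← Finset.sum_subset (Finset.range_subset_range.2 (by omega : i + 1 ≤ n + 1))
      (fun k _ hk2 => by
        have : i < k := by simp only [Finset.mem_range, Nat.lt_succ_iff, not_le] at hk2; omega
        rw [Aterm, Nat.choose_eq_zero_of_lt this]; simp)]
  apply Finset.sum_congr rfl
  intro k hk
  have hki : k ≤ i := by simpa [Nat.lt_succ_iff] using hk
  have e1 : n - k = (i - k) + (n - i) := by omega
  rw [Aterm, e1]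
  simp only [mul_pow]
  ring

lemma L2 (n : ℕ) (v : ℕ → ℝ) (x r : ℝ) {i : ℕ} (hi : i ≤ n) :
    (1-x) * (v i * bern n i ((1-r)*x)) = ∑ k ∈ Finset.range (n+1), Bterm n v x r i k := by
  rw [bern, show (1 - (1-r)*x) = r + (1-r)*(1-x) by ring, add_pow]
  simp only [Finset.mul_sum, Finset.sum_mul]
  rw [← Finset.sum_subset (Finset.range_subset_range.2 (by omega : n - i + 1 ≤ n + 1))
      (fun k _ hk2 => by
        have : n - i < k := by simp only [Finset.mem_range, Nat.lt_succ_iff, not_le] at hk2; omega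
        rw [Bterm, Nat.choose_eq_zero_of_lt this]; simp)]
  apply Finset.sum_congr rfl
  intro k hk
  have hki : k ≤ n - i := by simpa [Nat.lt_succ_iff] using hk
  have e1 : n - k = i + (n - i - k) := by omega
  rw [Bterm, e1]
  simp only [mul_pow]
  ring

lemma L3 (n : ℕ) (v : ℕ → ℝ) (x r : ℝ) {k : ℕ} (hk : k ≤ n) :
    (n.choose k : ℝ) * r^k * (1-r)^(n-k) *
      (∑ j ∈ Finset.range (n-k+2), coag n k v j * bern (n-k+1) j x) =
    ∑ i ∈ Finset.range (n+1), (Aterm n v x r i k + Bterm n v x r i k) := by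
  have hd : ((n - k + 1 : ℕ) : ℝ) ≠ 0 := by positivity
  rw [Finset.sum_add_distrib]
  have split : ∀ j, coag n k v j * bern (n-k+1) j x =
      ((j:ℝ)/((n-k+1:ℕ):ℝ) * v (j+k-1) * bern (n-k+1) j x) +
      ((1 - (j:ℝ)/((n-k+1:ℕ):ℝ)) * v j * bern (n-k+1) j x) := by
    intro j; rw [coag]; ring
  rw [Finset.sum_congr rfl (fun j _ => split j), Finset.sum_add_distrib, mul_add]
  congr 1
  · -- A part
    rw [show n - k + 2 = (n - k + 1) + 1 from rfl, Finset.sum_range_succ']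
    simp only [Nat.cast_zero, zero_div, zero_mul, add_zero]
    rw [Finset.mul_sum]
    have hAsum : ∑ i ∈ Finset.range (n+1), Aterm n v x r i k
        = ∑ j ∈ Finset.range (n-k+1), Aterm n v x r (k+j) k := by
      rw [Finset.range_eq_Ico,
        ← Finset.sum_Ico_consecutive _ (Nat.zero_le k) (by omega : k ≤ n+1)]
      have h0 : ∑ i ∈ Finset.Ico 0 k, Aterm n v x r i k = 0 := by
        apply Finset.sum_eq_zero
        intro i hi
        have : i < k := (Finset.mem_Ico.1 hi).2
        rw [Aterm, Nat.choose_eq_zero_of_lt this]; simp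
      rw [h0, zero_add, Finset.sum_Ico_eq_sum_range,
        show n + 1 - k = n - k + 1 by omega, Finset.range_eq_Ico]
    rw [hAsum]
    apply Finset.sum_congr rfl
    intro j hj
    have hjk : j ≤ n - k := by simpa [Nat.lt_succ_iff] using hj
    rw [Aterm, bern]
    rw [show j + 1 + k - 1 = k + j by omega,
      show k + j - k + 1 = j + 1 by omega,
      show n - (k + j) = n - k - j by omega,
      show n - k + 1 - (j + 1) = n - k - j by omega]
    have hnat : n.choose (k+j) * ((k+j).choose k) * (n-k+1) =
        n.choose k * ((j+1) * ((n-k+1).choose (j+1))) := by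
      have h1 : (n-k+1) * (n-k).choose j = (n-k+1).choose (j+1) * (j+1) :=
        Nat.add_one_mul_choose_eq (n-k) j
      have h2 := core_choose (show k + j ≤ n by omega)
      calc n.choose (k+j) * ((k+j).choose k) * (n-k+1)
          = (n.choose k * (n-k).choose j) * (n-k+1) := by rw [h2]
        _ = n.choose k * ((n-k+1) * (n-k).choose j) := by ring
        _ = n.choose k * ((n-k+1).choose (j+1) * (j+1)) := by rw [h1]
        _ = n.choose k * ((j+1) * ((n-k+1).choose (j+1))) := by ring
    have hcoef : (n.choose (k+j) : ℝ) * ((k+j).choose k : ℝ) * ((n-k+1:ℕ):ℝ) =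
        (n.choose k : ℝ) * (((j:ℝ)+1) * (((n-k+1).choose (j+1) : ℕ):ℝ)) := by
      exact_mod_cast hnat
    have hc1 : (n.choose (k+j) : ℝ) * ((k+j).choose k : ℝ) =
        (n.choose k : ℝ) * ((((j:ℕ)+1 : ℕ):ℝ)/((n-k+1:ℕ):ℝ) *
          (((n-k+1).choose (j+1) : ℕ):ℝ)) := by
      rw [div_mul_eq_mul_div, mul_div_assoc', eq_div_iff hd]
      exact_mod_cast hnat
    linear_combination (-(v (k+j) * r^k * (1-r)^(n-k) * x^(j+1) * (1-x)^(n-k-j))) * hc1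
  · -- B part
    rw [show n - k + 2 = (n - k + 1) + 1 from rfl, Finset.sum_range_succ]
    have hlast : (1 - ((n-k+1:ℕ):ℝ)/((n-k+1:ℕ):ℝ)) * v (n-k+1) * bern (n-k+1) (n-k+1) x = 0 := by
      rw [div_self hd]; ring
    rw [hlast, add_zero, Finset.mul_sum]
    rw [← Finset.sum_subset (Finset.range_subset_range.2 (by omega : n - k + 1 ≤ n + 1))
        (fun i hi1 hi2 => by
          have : n - i < k := by
            simp only [Finset.mem_range, Nat.lt_succ_iff, not_le] at hi1 hi2; omega
          rw [Bterm, Nat.choose_eq_zero_of_lt this]; simp)]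
    apply Finset.sum_congr rfl
    intro j hj
    have hjk : j ≤ n - k := by simpa [Nat.lt_succ_iff] using hj
    rw [Bterm, bern, show n - j - k + 1 = n - k + 1 - j by omega]
    have hnat : n.choose j * ((n-j).choose k) * (n-k+1) =
        n.choose k * (((n-k+1).choose j) * (n-k+1-j)) := by
      have h1 : (n-k).choose j * (n-k+1) = (n-k+1).choose j * (n-k+1-j) :=
        Nat.choose_mul_succ_eq (n-k) j
      have h2 := core_choose' (show j + k ≤ n by omega)
      calc n.choose j * ((n-j).choose k) * (n-k+1)
          = (n.choose k * (n-k).choose j) * (n-k+1) := by rw [h2]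
        _ = n.choose k * ((n-k).choose j * (n-k+1)) := by ring
        _ = n.choose k * (((n-k+1).choose j) * (n-k+1-j)) := by rw [h1]
    have hcast : ((n-k+1-j : ℕ):ℝ) = ((n-k+1:ℕ):ℝ) - (j:ℝ) := by
      rw [Nat.cast_sub (by omega : j ≤ n-k+1)]
    have hc1 : (n.choose j : ℝ) * ((n-j).choose k : ℝ) =
        (n.choose k : ℝ) * ((1 - (j:ℝ)/((n-k+1:ℕ):ℝ)) * (((n-k+1).choose j : ℕ):ℝ)) := by
      have hR : (n.choose j : ℝ) * ((n-j).choose k : ℝ) * ((n-k+1:ℕ):ℝ) =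
          (n.choose k : ℝ) * ((((n-k+1).choose j : ℕ):ℝ) * ((n-k+1-j : ℕ):ℝ)) := by
        exact_mod_cast hnat
      have hstep : (1:ℝ) - (j:ℝ)/((n-k+1:ℕ):ℝ) = ((n-k+1-j:ℕ):ℝ)/((n-k+1:ℕ):ℝ) := by
        rw [hcast, sub_div, div_self hd]
      rw [hstep, div_mul_eq_mul_div, mul_div_assoc', eq_div_iff hd]
      linear_combination hR
    linear_combination (-(v j * r^k * (1-r)^(n-k) * x^j * (1-x)^(n-k+1-j))) * hc1

lemma L4 (n : ℕ) (v : ℕ → ℝ) (x r : ℝ) {i : ℕ} (hi : i ≤ n) :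
    Aterm n v x r i 0 + Bterm n v x r i 0 = (1-r)^n * (v i * bern n i x) := by
  rw [Aterm, Bterm, bern]
  simp only [Nat.choose_zero_right, Nat.cast_one, Nat.sub_zero, pow_zero]
  ring

lemma L5 (n : ℕ) (v : ℕ → ℝ) (x r : ℝ) (hn : 1 ≤ n) {i : ℕ} (hi : i ≤ n) :
    Aterm n v x r i 1 + Bterm n v x r i 1 = (n:ℝ) * r * (1-r)^(n-1) * (v i * bern n i x) := by
  rw [Aterm, Bterm, bern]
  rcases Nat.eq_zero_or_pos i with h0 | h1
  · subst h0
    simp only [Nat.choose_zero_right, Nat.cast_one, Nat.choose_one_right, Nat.sub_zero,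
      Nat.choose_zero_succ, Nat.cast_zero]
    rw [show n - 1 + 1 = n by omega]
    ring
  · rcases eq_or_lt_of_le hi with he | hlt
    · subst he
      simp only [Nat.choose_self, Nat.cast_one, Nat.sub_self, Nat.choose_zero_succ,
        Nat.cast_zero, Nat.choose_one_right]
      rw [show i - 1 + 1 = i by omega]
      ring
    · rw [Nat.choose_one_right, Nat.choose_one_right,
        show i - 1 + 1 = i by omega, show n - i - 1 + 1 = n - i by omega,
        Nat.cast_sub hi]
      ring

/-- Coalescence (`Λ`-part) identity in the Bernstein basis. -/
theorem coalescence_generator_bernstein (n : ℕ) (hn : 1 ≤ n) (v : ℕ → ℝ)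
    (x r : ℝ) (hx : x ∈ Set.Icc (0:ℝ) 1) (hr : r ∈ Set.Icc (0:ℝ) 1) :
    x * (∑ i ∈ Finset.range (n+1), v i * bern n i (r + (1-r)*x)) +
        (1-x) * (∑ i ∈ Finset.range (n+1), v i * bern n i ((1-r)*x)) =
      (1-r)^n * (∑ i ∈ Finset.range (n+1), v i * bern n i x) +
        (n : ℝ) * r * (1-r)^(n-1) * (∑ i ∈ Finset.range (n+1), v i * bern n i x) +
        ∑ k ∈ Finset.Icc 2 n, (n.choose k : ℝ) * r^k * (1-r)^(n-k) *
          (∑ i ∈ Finset.range (n-k+2), coag n k v i * bern (n-k+1) i x) := by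
  set T : ℕ → ℝ := fun k => (n.choose k : ℝ) * r^k * (1-r)^(n-k) *
      (∑ i ∈ Finset.range (n-k+2), coag n k v i * bern (n-k+1) i x) with hT
  have hT0 : T 0 = (1-r)^n * (∑ i ∈ Finset.range (n+1), v i * bern n i x) := by
    simp only [hT]
    rw [L3 n v x r (Nat.zero_le n)]
    rw [Finset.mul_sum]
    apply Finset.sum_congr rfl
    intro i hi
    exact L4 n v x r (by simpa [Nat.lt_succ_iff] using hi)
  have hT1 : T 1 = (n:ℝ) * r * (1-r)^(n-1) * (∑ i ∈ Finset.range (n+1), v i * bern n i x) := by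
    simp only [hT]
    rw [L3 n v x r hn]
    rw [Finset.mul_sum]
    apply Finset.sum_congr rfl
    intro i hi
    exact L5 n v x r hn (by simpa [Nat.lt_succ_iff] using hi)
  calc x * (∑ i ∈ Finset.range (n+1), v i * bern n i (r + (1-r)*x)) +
        (1-x) * (∑ i ∈ Finset.range (n+1), v i * bern n i ((1-r)*x))
      = ∑ i ∈ Finset.range (n+1), (x * (v i * bern n i (r + (1-r)*x)) +
          (1-x) * (v i * bern n i ((1-r)*x))) := by
        rw [Finset.mul_sum, Finset.mul_sum, ← Finset.sum_add_distrib]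
    _ = ∑ i ∈ Finset.range (n+1), ∑ k ∈ Finset.range (n+1),
          (Aterm n v x r i k + Bterm n v x r i k) := by
        apply Finset.sum_congr rfl
        intro i hi
        have hi' : i ≤ n := by simpa [Nat.lt_succ_iff] using hi
        rw [L1 n v x r hi', L2 n v x r hi', ← Finset.sum_add_distrib]
    _ = ∑ k ∈ Finset.range (n+1), ∑ i ∈ Finset.range (n+1),
          (Aterm n v x r i k + Bterm n v x r i k) := Finset.sum_comm
    _ = ∑ k ∈ Finset.range (n+1), T k := by
        apply Finset.sum_congr rfl
        intro k hk
        exact (L3 n v x r (by simpa [Nat.lt_succ_iff] using hk)).symm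
    _ = T 0 + T 1 + ∑ k ∈ Finset.Icc 2 n, T k := by
        rw [Finset.range_eq_Ico,
          ← Finset.sum_Ico_consecutive _ (by omega : (0:ℕ) ≤ 2) (by omega : 2 ≤ n+1),
          show Finset.Ico 2 (n+1) = Finset.Icc 2 n from Finset.Ico_add_one_right_eq_Icc 2 n,
          show Finset.Ico 0 2 = Finset.range 2 by rw [Finset.range_eq_Ico],
          Finset.sum_range_succ, Finset.sum_range_one]
    _ = _ := by rw [hT0, hT1]
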